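/- Let E be a nonempty real Banach space and let u : E → ℝ be a differentiable function that is bounded from above. Then for every ε > 0 there exists a point x ∈ E such that u(x) > sup_E u − ε and ‖Du(x)‖ ≤ ε, where Du(x) denotes the Fréchet derivative of u at x. In particular, there exists a sequence (x_k) with u(x_k) → sup_E u and ‖Du(x_k)‖ → 0. -/
import Mathlib


open Filter Set

/-- Ekeland-style lemma. -/
lemma my_ekeland {E : Type*} [NormedAddCommGroup E] [CompleteSpace E]
    (u : E → ℝ) (hc : Continuous u) (hbdd : BddAbove (Set.range u))
    (ε : ℝ) (hε : 0 < ε) (x₀ : E) :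
    ∃ x : E, u x₀ ≤ u x ∧ ∀ y, u y ≤ u x + ε * ‖y - x‖ := by
  set S : E → Set E := fun x => {y | u x + ε * ‖y - x‖ ≤ u y} with hS
  have hSx : ∀ x, x ∈ S x := by intro x; simp [hS]
  have htrans : ∀ x y z, y ∈ S x → z ∈ S y → z ∈ S x := by
    intro x y z hy hz
    simp only [hS, Set.mem_setOf_eq] at *
    have h3 : ‖z - x‖ ≤ ‖z - y‖ + ‖y - x‖ := norm_sub_le_norm_sub_add_norm_sub z y x
    nlinarith
  have hbd : ∀ x, BddAbove (u '' S x) := fun x =>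
    hbdd.mono (by rintro _ ⟨y, _, rfl⟩; exact ⟨y, rfl⟩)
  have hne : ∀ x, (u '' S x).Nonempty := fun x => ⟨u x, x, hSx x, rfl⟩
  have hchoice : ∀ x (n : ℕ), ∃ y, y ∈ S x ∧ sSup (u '' S x) - (1/2 : ℝ)^n < u y := by
    intro x n
    have hlt : sSup (u '' S x) - (1/2 : ℝ)^n < sSup (u '' S x) := by
      have : (0:ℝ) < (1/2:ℝ)^n := by positivity
      linarith
    obtain ⟨v, hv, hlt'⟩ := exists_lt_of_lt_csSup (hne x) hlt
    obtain ⟨y, hy, rfl⟩ := hv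
    exact ⟨y, hy, hlt'⟩
  -- build the sequence
  let seq : ℕ → E := fun n => Nat.rec x₀ (fun n xn => (hchoice xn n).choose) n
  have hseq0 : seq 0 = x₀ := rfl
  have hstep : ∀ n, seq (n+1) ∈ S (seq n) ∧ sSup (u '' S (seq n)) - (1/2:ℝ)^n < u (seq (n+1)) :=
    fun n => (hchoice (seq n) n).choose_spec
  have hchain : ∀ n m, n ≤ m → seq m ∈ S (seq n) := by
    intro n m hnm
    induction m with
    | zero => obtain rfl : n = 0 := Nat.le_zero.mp hnm; exact hSx _
    | succ m ih =>
      rcases Nat.lt_or_ge n (m+1) with h | h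
      · exact htrans _ _ _ (ih (Nat.lt_succ_iff.mp h)) (hstep m).1
      · have : n = m + 1 := le_antisymm hnm h
        exact this ▸ hSx _
  have humono : Monotone (fun n => u (seq n)) := by
    intro n m hnm
    have := hchain n m hnm
    simp only [hS, Set.mem_setOf_eq] at this
    have h0 : 0 ≤ ε * ‖seq m - seq n‖ := by positivity
    dsimp; linarith
  have hubdd : BddAbove (Set.range fun n => u (seq n)) :=
    hbdd.mono (by rintro _ ⟨n, rfl⟩; exact ⟨seq n, rfl⟩)
  set L : ℝ := ⨆ n, u (seq n) with hL
  have htendsto : Tendsto (fun n => u (seq n)) atTop (nhds L) :=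
    tendsto_atTop_ciSup humono hubdd
  have hule : ∀ n, u (seq n) ≤ L := fun n => le_ciSup hubdd n
  -- Cauchy
  have hcauchy : CauchySeq seq := by
    apply cauchySeq_of_le_tendsto_0 (fun N => (L - u (seq N)) / ε)
    · intro n m N hn hm
      wlog hnm : n ≤ m generalizing n m
      · rw [dist_comm]; exact this m n hm hn (le_of_not_ge hnm)
      have := hchain n m hnm
      simp only [hS, Set.mem_setOf_eq] at this
      rw [dist_eq_norm, norm_sub_rev]
      have h1 : u (seq N) ≤ u (seq n) := humono hn
      have h2 : u (seq m) ≤ L := hule m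
      rw [le_div_iff₀ hε]
      nlinarith
    · have : Tendsto (fun N => L - u (seq N)) atTop (nhds 0) := by
        have := htendsto.const_sub L
        simpa using this
      simpa using this.div_const ε
  obtain ⟨x, hx⟩ := cauchySeq_tendsto_of_complete hcauchy
  have hxS : ∀ n, x ∈ S (seq n) := by
    intro n
    have hclosed : IsClosed (S (seq n)) :=
      isClosed_le (continuous_const.add (continuous_const.mul ((continuous_id.sub continuous_const).norm))) hc
    exact hclosed.mem_of_tendsto hx (eventually_atTop.2 ⟨n, fun m hm => hchain n m hm⟩)
  have hux : u x = L := tendsto_nhds_unique ((hc.tendsto x).comp hx) htendsto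
  refine ⟨x, ?_, ?_⟩
  · have := hxS 0
    rw [hseq0] at this
    simp only [hS, Set.mem_setOf_eq] at this
    have : u x₀ + ε * ‖x - x₀‖ ≤ u x := this
    nlinarith [norm_nonneg (x - x₀)]
  · intro y
    by_contra hcon
    push_neg at hcon
    have hyS : y ∈ S x := le_of_lt hcon
    have hySn : ∀ n, y ∈ S (seq n) := fun n => htrans _ _ _ (hxS n) hyS
    have hyle : ∀ n : ℕ, u y ≤ u x + (1/2:ℝ)^n := by
      intro n
      have h1 : u y ≤ sSup (u '' S (seq n)) := le_csSup (hbd _) ⟨y, hySn n, rfl⟩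
      have h2 := (hstep n).2
      have h3 : u (seq (n+1)) ≤ L := hule (n+1)
      rw [hux]; linarith
    have hyx : u y ≤ u x := by
      have h0 : Tendsto (fun n : ℕ => u x + (1/2:ℝ)^n) atTop (nhds (u x + 0)) :=
        tendsto_const_nhds.add (tendsto_pow_atTop_nhds_zero_of_lt_one (by norm_num) (by norm_num))
      rw [add_zero] at h0
      exact ge_of_tendsto h0 (Eventually.of_forall hyle)
    nlinarith [norm_nonneg (y - x), mul_nonneg hε.le (norm_nonneg (y - x))]

lemma my_deriv_bound {E : Type*} [NormedAddCommGroup E] [NormedSpace ℝ E]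
    (u : E → ℝ) (x : E) (hd : Differentiable ℝ u)
    (ε : ℝ) (hε : 0 ≤ ε) (h : ∀ y, u y ≤ u x + ε * ‖y - x‖) :
    ‖fderiv ℝ u x‖ ≤ ε := by
  set f := fderiv ℝ u x with hf
  have key : ∀ v : E, f v ≤ ε * ‖v‖ := by
    intro v
    have hcurve : HasDerivAt (fun t : ℝ => x + t • v) v 0 := by
      simpa using ((hasDerivAt_id (0:ℝ)).smul_const v).const_add x
    have hcomp : HasDerivAt (fun t : ℝ => u (x + t • v)) (f v) 0 := by
      have hfd : HasFDerivAt u f (x + (0:ℝ) • v) := by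
        simpa using (hd x).hasFDerivAt
      exact hfd.comp_hasDerivAt 0 hcurve
    have hslope : Tendsto (slope (fun t : ℝ => u (x + t • v)) 0) (nhdsWithin 0 (Ioi 0)) (nhds (f v)) :=
      (hasDerivAt_iff_tendsto_slope.mp hcomp).mono_left
        (nhdsWithin_mono 0 (fun t ht => ne_of_gt ht))
    refine le_of_tendsto hslope ?_
    filter_upwards [self_mem_nhdsWithin] with t ht
    have ht' : (0:ℝ) < t := ht
    have hb : u (x + t • v) ≤ u x + ε * (t * ‖v‖) := by
      have := h (x + t • v)
      simpa [norm_smul, abs_of_pos ht'] using this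
    rw [slope_def_field, div_le_iff₀ (by simpa using ht')]
    simp only [zero_smul, add_zero] at *
    nlinarith
  refine ContinuousLinearMap.opNorm_le_bound f hε (fun v => ?_)
  rw [Real.norm_eq_abs, abs_le]
  constructor
  · have := key (-v)
    simp only [map_neg, norm_neg] at this
    linarith
  · exact key v


/-- On a (nonempty) real Banach space, a differentiable function bounded from above admits,
for every `ε > 0`, a point where it is `ε`-close to its supremum and where the norm of its
Fréchet derivative is at most `ε`; in particular there is a sequence `x k` along which `u`
tends to its supremum and the derivative norms tend to `0`. -/
theorem banach_ekeland_almost_critical {E : Type*} [NormedAddCommGroup E] [NormedSpace ℝ E]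
    [CompleteSpace E] [Nonempty E]
    (u : E → ℝ) (hdiff : Differentiable ℝ u) (hbdd : BddAbove (Set.range u)) :
    (∀ ε : ℝ, 0 < ε → ∃ x : E, (⨆ y, u y) - ε < u x ∧ ‖fderiv ℝ u x‖ ≤ ε) ∧
      ∃ x : ℕ → E,
        Filter.Tendsto (fun k => u (x k)) Filter.atTop (nhds (⨆ y, u y)) ∧
        Filter.Tendsto (fun k => ‖fderiv ℝ u (x k)‖) Filter.atTop (nhds 0) := by
  have hne : (Set.range u).Nonempty := Set.range_nonempty u
  have hle : ∀ z : E, u z ≤ ⨆ y, u y := fun z => le_ciSup hbdd z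
  have main : ∀ ε : ℝ, 0 < ε → ∃ x : E, (⨆ y, u y) - ε < u x ∧ ‖fderiv ℝ u x‖ ≤ ε := by
    intro ε hε
    have hlt : (⨆ y, u y) - ε < sSup (Set.range u) := by
      rw [iSup]; linarith [sub_lt_self (sSup (Set.range u)) hε]
    obtain ⟨_, ⟨x₀, rfl⟩, hx₀⟩ := exists_lt_of_lt_csSup hne hlt
    obtain ⟨x, hx1, hx2⟩ := my_ekeland u hdiff.continuous hbdd ε hε x₀
    refine ⟨x, lt_of_lt_of_le hx₀ hx1, ?_⟩
    exact my_deriv_bound u x hdiff ε hε.le (fun y => by have := hx2 y; linarith [hx2 y])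
  refine ⟨main, ?_⟩
  choose x hx1 hx2 using fun k : ℕ => main (1/(k+1)) (by positivity)
  refine ⟨x, ?_, ?_⟩
  · have hlow : Tendsto (fun k : ℕ => (⨆ y, u y) - 1/(k+1)) atTop (nhds ((⨆ y, u y) - 0)) :=
      tendsto_const_nhds.sub tendsto_one_div_add_atTop_nhds_zero_nat
    rw [sub_zero] at hlow
    exact tendsto_of_tendsto_of_tendsto_of_le_of_le hlow tendsto_const_nhds
      (fun k => (hx1 k).le) (fun k => hle (x k))
  · exact squeeze_zero (fun k => norm_nonneg _) hx2 tendsto_one_div_add_atTop_nhds_zero_nat
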